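/- Let I ⊆ ℝ be an open interval, b, c, f₁ : ℝ → ℝ with c(x) ≠ 0 on I, let C₁ ∈ ℝ, and let F be differentiable on I with F'(x) = (f₁(x) − b(x)²)/(2c(x)) for all x ∈ I. Define a(x) = ( f₁(x) − ( b(x) + c(x)·(F(x) − C₁) )² ) / (4c(x)). Then the function y_p(x) = (F(x) − C₁)/2 solves the Riccati equation y_p'(x) = a(x) + b(x)y_p(x) + c(x)y_p(x)² for all x ∈ I. -/

import Mathlib

/-- Particular solution underlying Theorem 1 (Case 1): with
`F' = (f₁ − b²)/(2c)` and
`a = (f₁ − (b + c(F − C₁))²)/(4c)`, the function `y_p = (F − C₁)/2`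
solves the Riccati equation `y' = a + b y + c y²` on the open interval. -/
theorem riccati_case1_particular
    (p q : ℝ) (a b c f₁ F : ℝ → ℝ) (C₁ : ℝ)
    (hc : ∀ x ∈ Set.Ioo p q, c x ≠ 0)
    (hF : ∀ x ∈ Set.Ioo p q,
      HasDerivAt F ((f₁ x - b x ^ 2) / (2 * c x)) x)
    (ha : ∀ x ∈ Set.Ioo p q,
      a x = (f₁ x - (b x + c x * (F x - C₁)) ^ 2) / (4 * c x)) :
    ∀ x ∈ Set.Ioo p q,
      HasDerivAt (fun t => (F t - C₁) / 2)
        (a x + b x * ((F x - C₁) / 2) + c x * ((F x - C₁) / 2) ^ 2) x := by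
  intro x hx
  have hcx := hc x hx
  have h := ((hF x hx).sub_const C₁).div_const 2
  refine h.congr_deriv ?_
  rw [ha x hx]
  field_simp
  ring
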